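/- Let K be an infinite field, n ≥ 1, R = K[x_1,…,x_n], and let V₁ ⊂ R denote the K-vector space of homogeneous linear forms. Let σ : V₁ → R be a K-linear map such that for every ℓ ∈ V₁ the polynomial σ(ℓ) is divisible by ℓ in R. Then there exists a single polynomial f ∈ R such that σ(ℓ) = f · ℓ for every ℓ ∈ V₁. -/

import Mathlib

open MvPolynomial

/-- If `σ` is a `K`-linear map from the space of homogeneous linear forms to
`K[x_1,…,x_n]` (K infinite) such that `ℓ ∣ σ(ℓ)` for every linear form `ℓ`, then there
is a single polynomial `f` with `σ(ℓ) = f·ℓ` for all `ℓ`. -/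
theorem stmt8 (K : Type*) [Field K] [Infinite K] (n : ℕ) (hn : 1 ≤ n)
    (σ : homogeneousSubmodule (Fin n) K 1 →ₗ[K] MvPolynomial (Fin n) K)
    (hdiv : ∀ ℓ : homogeneousSubmodule (Fin n) K 1,
      (ℓ : MvPolynomial (Fin n) K) ∣ σ ℓ) :
    ∃ f : MvPolynomial (Fin n) K,
      ∀ ℓ : homogeneousSubmodule (Fin n) K 1,
        σ ℓ = f * (ℓ : MvPolynomial (Fin n) K) := by
  haveI : NeZero n := ⟨by omega⟩
  set e₀ : homogeneousSubmodule (Fin n) K 1 :=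
    ⟨X 0, isHomogeneous_X K 0⟩ with he₀
  obtain ⟨f, hf⟩ := hdiv e₀
  refine ⟨f, fun ℓ => ?_⟩
  obtain ⟨g, hg⟩ := hdiv ℓ
  have key : (f - g) * (X 0 : MvPolynomial (Fin n) K)
      * (ℓ : MvPolynomial (Fin n) K) = 0 := by
    apply MvPolynomial.funext
    intro a
    rw [map_zero]
    by_cases h0 : a 0 = 0
    · simp [h0]
    by_cases hl : eval a (ℓ : MvPolynomial (Fin n) K) = 0
    · simp [hl]
    · set t : K := - a 0 / eval a (ℓ : MvPolynomial (Fin n) K) with ht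
      obtain ⟨q, hq⟩ := hdiv (e₀ + t • ℓ)
      have hco : ((e₀ + t • ℓ : homogeneousSubmodule (Fin n) K 1)
          : MvPolynomial (Fin n) K) = X 0 + C t * (ℓ : MvPolynomial (Fin n) K) := by
        simp [he₀, smul_eq_C_mul]
      have hev0 : eval a ((e₀ + t • ℓ : homogeneousSubmodule (Fin n) K 1)
          : MvPolynomial (Fin n) K) = 0 := by
        rw [hco]
        simp only [map_add, map_mul, eval_X, eval_C]
        rw [ht, div_mul_cancel₀ _ hl]; ring
      have hσ : σ (e₀ + t • ℓ) = X 0 * f + C t * ((ℓ : MvPolynomial (Fin n) K) * g) := by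
        rw [map_add, map_smul, hf, hg, smul_eq_C_mul]
      have := congrArg (eval a) hq
      rw [hσ, map_mul, hev0, zero_mul] at this
      simp only [map_add, map_mul, eval_X, eval_C] at this
      have hta : t * eval a (ℓ : MvPolynomial (Fin n) K) = - a 0 := by
        rw [ht, div_mul_cancel₀ _ hl]
      simp only [map_mul, map_sub]
      rw [eval_X]
      have : a 0 * eval a f + t * eval a (ℓ : MvPolynomial (Fin n) K) * eval a g = 0 := by
        rw [← this]; ring
      rw [hta] at this
      have hfg : eval a f = eval a g :=
        mul_left_cancel₀ h0 (by linear_combination this)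
      rw [hfg]; ring
  rcases mul_eq_zero.mp key with h | h
  · rcases mul_eq_zero.mp h with h | h
    · have : f = g := by linear_combination h
      rw [hg, this]; ring
    · exact absurd h (X_ne_zero 0)
  · rw [hg, h]; ring
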